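/- (Non-uniqueness of operator-sum representations.) If {E_a}_{a=1}^N and {F_b}_{b=1}^M are two finite families of m×n complex matrices that implement the same map, i.e. Σ_a E_a ρ E_a† = Σ_b F_b ρ F_b† for all ρ ∈ M_n(ℂ), then there is a scalar matrix U = (u_{ab}) of complex numbers such that E_a = Σ_b u_{ab} F_b for all a. -/

import Mathlib

open Matrix

-- algebraic identity: sum over a of |⟨v, vec(G a)⟩|² expressed via the second-moment matrix
lemma sum_abs_sq {n m N : ℕ} (G : Fin N → Matrix (Fin m) (Fin n) ℂ)
    (v : Fin m × Fin n → ℂ) :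
    ∑ a, (∑ p : Fin m × Fin n, (starRingEnd ℂ) (v p) * G a p.1 p.2) *
        (starRingEnd ℂ) (∑ q : Fin m × Fin n, (starRingEnd ℂ) (v q) * G a q.1 q.2)
      = ∑ p : Fin m × Fin n, ∑ q : Fin m × Fin n,
          ((starRingEnd ℂ) (v p) * v q) * ∑ a, G a p.1 p.2 * (starRingEnd ℂ) (G a q.1 q.2) := by
  have : ∀ a, (∑ p : Fin m × Fin n, (starRingEnd ℂ) (v p) * G a p.1 p.2) *
        (starRingEnd ℂ) (∑ q : Fin m × Fin n, (starRingEnd ℂ) (v q) * G a q.1 q.2)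
      = ∑ p : Fin m × Fin n, ∑ q : Fin m × Fin n,
          ((starRingEnd ℂ) (v p) * v q) * (G a p.1 p.2 * (starRingEnd ℂ) (G a q.1 q.2)) := by
    intro a
    rw [map_sum, Finset.sum_mul_sum]
    refine Finset.sum_congr rfl fun p _ => Finset.sum_congr rfl fun q _ => ?_
    simp only [_root_.map_mul, RingHomCompTriple.comp_apply, RingHom.id_apply, Complex.conj_conj]
    ring
  simp_rw [this, Finset.mul_sum]
  rw [Finset.sum_comm]
  refine Finset.sum_congr rfl fun p _ => ?_
  rw [Finset.sum_comm]


/-- **Non-uniqueness of operator-sum representations.**  If two finite families `{E_a}`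
and `{F_b}` of `m × n` matrices implement the same map, i.e.
`Σ_a E_a ρ E_a† = Σ_b F_b ρ F_b†` for all `ρ`, then there is a scalar matrix
`U = (u_{ab})` with `E_a = Σ_b u_{ab} F_b` for all `a`. -/
theorem opsum_nonunique {n m N M : ℕ}
    (E : Fin N → Matrix (Fin m) (Fin n) ℂ) (F : Fin M → Matrix (Fin m) (Fin n) ℂ)
    (h : ∀ ρ : Matrix (Fin n) (Fin n) ℂ,
      ∑ a, E a * ρ * (E a)ᴴ = ∑ b, F b * ρ * (F b)ᴴ) :
    ∃ u : Fin N → Fin M → ℂ, ∀ a, E a = ∑ b, u a b • F b := by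
  -- pointwise second-moment identity
  have key : ∀ (j l : Fin n) (i k : Fin m),
      ∑ a, E a i j * (starRingEnd ℂ) (E a k l) = ∑ b, F b i j * (starRingEnd ℂ) (F b k l) := by
    intro j l i k
    have h1 := congrFun (congrFun (h (single j l (1:ℂ))) i) k
    have eE : (∑ a, E a * single j l (1:ℂ) * (E a)ᴴ) i k
        = ∑ a, E a i j * (starRingEnd ℂ) (E a k l) := by
      simp [Matrix.sum_apply, mul_apply, single, conjTranspose_apply, mul_comm,
        Finset.sum_ite_eq, ite_and, Finset.sum_ite_eq']
    have eF : (∑ b, F b * single j l (1:ℂ) * (F b)ᴴ) i k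
        = ∑ b, F b i j * (starRingEnd ℂ) (F b k l) := by
      simp [Matrix.sum_apply, mul_apply, single, conjTranspose_apply, mul_comm,
        Finset.sum_ite_eq, ite_and, Finset.sum_ite_eq']
    rw [← eE, ← eF, h1]
  -- vectorization
  let T : Matrix (Fin m) (Fin n) ℂ ≃ₗ[ℂ] EuclideanSpace ℂ (Fin m × Fin n) :=
    (LinearEquiv.curry ℂ ℂ (Fin m) (Fin n)).symm ≪≫ₗ
      (WithLp.linearEquiv 2 ℂ (Fin m × Fin n → ℂ)).symm
  have hT : ∀ (A : Matrix (Fin m) (Fin n) ℂ) (p : Fin m × Fin n), T A p = A p.1 p.2 := by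
    intro A p; rfl
  set W : Submodule ℂ (EuclideanSpace ℂ (Fin m × Fin n)) :=
    Submodule.span ℂ (Set.range (fun b => T (F b))) with hW
  have hmem : ∀ a, T (E a) ∈ W := by
    intro a
    rw [← Submodule.orthogonal_orthogonal W]
    rw [Submodule.mem_orthogonal]
    intro v hv
    -- v ⊥ each T (F b)
    have hvF : ∀ b, (inner ℂ v (T (F b)) : ℂ) = 0 := by
      intro b
      have := hv (T (F b)) (Submodule.subset_span ⟨b, rfl⟩)
      rw [← inner_conj_symm, this, map_zero]
    -- sum of squared norms equals the F-side, which is zero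
    have hsum : ∑ a, (inner ℂ v (T (E a)) : ℂ) * (starRingEnd ℂ) (inner ℂ v (T (E a)) : ℂ) = 0 := by
      have hE : ∀ G : Fin N → Matrix (Fin m) (Fin n) ℂ, True := fun _ => trivial
      have e1 : ∀ (a : Fin N), (inner ℂ v (T (E a)) : ℂ)
          = ∑ p : Fin m × Fin n, (starRingEnd ℂ) (v p) * E a p.1 p.2 := by
        intro a
        rw [PiLp.inner_apply]
        simp [hT, mul_comm]
      have e2 : ∀ (b : Fin M), (inner ℂ v (T (F b)) : ℂ)
          = ∑ p : Fin m × Fin n, (starRingEnd ℂ) (v p) * F b p.1 p.2 := by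
        intro b
        rw [PiLp.inner_apply]
        simp [hT, mul_comm]
      simp_rw [e1]
      rw [sum_abs_sq E v]
      have : ∀ p q : Fin m × Fin n,
          ((starRingEnd ℂ) (v p) * v q) * ∑ a, E a p.1 p.2 * (starRingEnd ℂ) (E a q.1 q.2)
          = ((starRingEnd ℂ) (v p) * v q) * ∑ b, F b p.1 p.2 * (starRingEnd ℂ) (F b q.1 q.2) := by
        intro p q; rw [key]
      simp_rw [this]
      rw [← sum_abs_sq F v]
      simp_rw [← e2]
      simp [hvF]
    -- nonneg terms summing to zero ⇒ each zero
    have hz : (inner ℂ v (T (E a)) : ℂ) = 0 := by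
      have h2 : ∑ a, Complex.normSq (inner ℂ v (T (E a)) : ℂ) = 0 := by
        have h3 : ((∑ a, Complex.normSq (inner ℂ v (T (E a)) : ℂ) : ℝ) : ℂ) = 0 := by
          push_cast
          simp_rw [← Complex.mul_conj]
          exact hsum
        exact_mod_cast h3
      have := (Finset.sum_eq_zero_iff_of_nonneg (fun a _ => Complex.normSq_nonneg _)).mp h2
        a (Finset.mem_univ a)
      exact Complex.normSq_eq_zero.mp this
    exact hz
  -- convert span membership back
  have hmem' : ∀ a, E a ∈ Submodule.span ℂ (Set.range F) := by
    intro a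
    have := hmem a
    rw [hW] at this
    have hr : Set.range (fun b => T (F b)) = ⇑T.toLinearMap '' Set.range F := by
      rw [← Set.range_comp]; rfl
    rw [hr, ← Submodule.map_span T.toLinearMap] at this
    rcases this with ⟨x, hx, hxe⟩
    have : x = E a := T.injective hxe
    rwa [this] at hx
  have := fun a => (Submodule.mem_span_range_iff_exists_fun ℂ).mp (hmem' a)
  choose u hu using this
  exact ⟨u, fun a => (hu a).symm⟩
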